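/- Let q be a prime power, let d be an integer with 1 ≤ d ≤ q − 2, set r = ⌈(q−2)/d⌉, and let N be an integer with 1 ≤ N ≤ q^r. Then there exists a d-disjunct binary matrix with q(q−1) rows and N columns, namely the Kautz–Singleton concatenation of a [q−1, r]_q Reed–Solomon code (evaluations of polynomials of degree < r over the field with q elements at q−1 distinct points) with the q × q identity matrix, restricted to N of its columns. -/
import Mathlib

open Polynomial Finset


/-- Let `q` be a prime power, `1 ≤ d ≤ q - 2`, `r = ⌈(q-2)/d⌉`, and
`1 ≤ N ≤ q^r`.  The Kautz–Singleton concatenation of a `[q-1, r]_q` Reed–Solomon code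
(evaluations of polynomials of degree `< r` over a field `F` with `q` elements at
`q - 1` distinct points) with the `q × q` identity matrix, restricted to `N` of its
columns, is a `d`-disjunct binary matrix with `q(q-1)` rows and `N` columns.

Rows are indexed by pairs `(a, s) : Fin (q-1) × F` (position `a` of the outer codeword,
inner-code coordinate `s`); the entry of column `j` in row `(a, s)` is `1` iff the
polynomial with coefficient vector `σ j` evaluates to `s` at the point `pts a`.
`d`-disjunctness is stated explicitly. -/
theorem stmt3 (q d N : ℕ) (hd1 : 1 ≤ d) (hd2 : d ≤ q - 2) (hq : IsPrimePow q)
    (r : ℕ) (hr : r = (q - 2) ⌈/⌉ d) (hN1 : 1 ≤ N) (hN2 : N ≤ q ^ r)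
    (F : Type) [Field F] [Fintype F] (hF : Fintype.card F = q)
    (pts : Fin (q - 1) → F) (hpts : Function.Injective pts)
    (σ : Fin N → (Fin r → F)) (hσ : Function.Injective σ)
    (M : Fin (q - 1) × F → Fin N → Bool)
    (hM : ∀ p : Fin (q - 1) × F, ∀ j : Fin N,
      (M p j = true ↔ (∑ k : Fin r, σ j k * pts p.1 ^ (k : ℕ)) = p.2)) :
    ∀ j : Fin N, ∀ T : Finset (Fin N), T.card ≤ d → j ∉ T →
      ∃ p : Fin (q - 1) × F, M p j = true ∧ ∀ j' ∈ T, M p j' = false := by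
  classical
  intro j T hT hjT
  have hr1 : 1 ≤ r := by
    rw [hr, Nat.ceilDiv_eq_add_pred_div]
    have : d ≤ q - 2 + d - 1 := by omega
    exact Nat.one_le_div_iff (by omega) |>.2 this
  -- polynomial attached to each column
  set P : Fin N → F[X] := fun i => ∑ k : Fin r, Polynomial.C (σ i k) * Polynomial.X ^ (k : ℕ)
    with hP
  have hPeval : ∀ i a, (P i).eval (pts a) = ∑ k : Fin r, σ i k * pts a ^ (k : ℕ) := by
    intro i a
    simp [hP, Polynomial.eval_finset_sum]
  have hPcoeff : ∀ i (k : Fin r), (P i).coeff (k : ℕ) = σ i k := by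
    intro i k
    rw [hP]
    simp only [Polynomial.finset_sum_coeff, Polynomial.coeff_C_mul, Polynomial.coeff_X_pow]
    rw [Finset.sum_eq_single k]
    · simp
    · intro b _ hb
      have : (k : ℕ) ≠ (b : ℕ) := fun h => hb (Fin.ext h.symm)
      simp [this]
    · simp
  have hPinj : Function.Injective P := by
    intro i i' h
    apply hσ; funext k
    rw [← hPcoeff i k, ← hPcoeff i' k, h]
  have hPdeg : ∀ i, (P i).natDegree ≤ r - 1 := by
    intro i
    apply Polynomial.natDegree_sum_le_of_forall_le
    intro k _
    calc (Polynomial.C (σ i k) * Polynomial.X ^ (k : ℕ)).natDegree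
        ≤ (k : ℕ) := le_trans (Polynomial.natDegree_C_mul_le _ _)
          (le_of_eq (Polynomial.natDegree_X_pow _))
      _ ≤ r - 1 := by omega
  -- set of agreement points with column j
  set S : Fin N → Finset (Fin (q - 1)) :=
    fun j' => Finset.univ.filter (fun a => (P j).eval (pts a) = (P j').eval (pts a)) with hS
  have hScard : ∀ j' ∈ T, (S j').card ≤ r - 1 := by
    intro j' hj'
    have hne : P j ≠ P j' := fun h => (fun hjj : j ≠ j' => hjj (hPinj h)) (fun h' => hjT (h' ▸ hj'))
    set D := P j - P j' with hD
    have hD0 : D ≠ 0 := sub_ne_zero.2 hne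
    have hDdeg : D.natDegree ≤ r - 1 :=
      le_trans (Polynomial.natDegree_sub_le _ _) (by simp [hPdeg j, hPdeg j'])
    have hsub : ∀ a ∈ S j', pts a ∈ D.roots.toFinset := by
      intro a ha
      rw [hS] at ha
      simp only [Finset.mem_filter] at ha
      rw [Multiset.mem_toFinset, Polynomial.mem_roots hD0]
      simp [hD, Polynomial.IsRoot, ha.2]
    calc (S j').card ≤ D.roots.toFinset.card :=
          Finset.card_le_card_of_injOn pts (fun a ha => hsub a ha) (hpts.injOn)
      _ ≤ Multiset.card D.roots := D.roots.toFinset_card_le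
      _ ≤ D.natDegree := Polynomial.card_roots' D
      _ ≤ r - 1 := hDdeg
  -- counting
  have hcount : (T.biUnion S).card < q - 1 := by
    have h1 : (T.biUnion S).card ≤ T.card * (r - 1) := by
      calc (T.biUnion S).card ≤ ∑ j' ∈ T, (S j').card := Finset.card_biUnion_le
        _ ≤ ∑ _j' ∈ T, (r - 1) := Finset.sum_le_sum hScard
        _ = T.card * (r - 1) := by rw [Finset.sum_const, smul_eq_mul]
    have h2 : d * (r - 1) < q - 1 := by
      have hrd : d * r ≤ q - 2 + d - 1 := by
        rw [hr, Nat.ceilDiv_eq_add_pred_div, mul_comm]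
        exact Nat.div_mul_le_self _ _
      have := Nat.mul_le_mul_left d (Nat.sub_le r 1)
      have hmp : d * (r - 1) = d * r - d := by
        rw [show r - 1 = Nat.pred r from rfl, Nat.mul_pred]
      omega
    exact lt_of_le_of_lt (le_trans h1 (Nat.mul_le_mul_right _ hT)) h2
  have hex : ∃ a : Fin (q - 1), a ∉ T.biUnion S := by
    by_contra h
    push_neg at h
    have : (Finset.univ : Finset (Fin (q - 1))).card ≤ (T.biUnion S).card :=
      Finset.card_le_card (fun a _ => h a)
    simp only [Finset.card_univ, Fintype.card_fin] at this
    omega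
  obtain ⟨a, ha⟩ := hex
  refine ⟨(a, (P j).eval (pts a)), ?_, ?_⟩
  · rw [hM]
    simp [hPeval]
  · intro j' hj'
    have haj' : a ∉ S j' := fun h => ha (Finset.mem_biUnion.2 ⟨j', hj', h⟩)
    rw [Bool.eq_false_iff]
    intro hMtrue
    apply haj'
    rw [hS]
    simp only [Finset.mem_filter, Finset.mem_univ, true_and]
    rw [hPeval, hPeval]
    have := (hM (a, (P j).eval (pts a)) j').1 hMtrue
    simp only at this
    rw [this, hPeval]
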